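/- arXiv:math/0607660 — 3 statements merged into one kernel-verified Lean document; each statement's English description precedes it below -/
import Mathlib

section
/- Let R be a commutative Noetherian ring of prime characteristic p whose Frobenius endomorphism is finite and flat, let S be a multiplicative subset of R, and let R_S be the localization of R at S (a commutative ring together with the localization map R → R_S). Then the Frobenius endomorphism of R_S is again finite and flat, and for every ideal a of R and every real number c ≥ 0 one has τ((a·R_S)^c) = τ(a^c)·R_S, where a·R_S and τ(a^c)·R_S denote the extensions of these ideals along the localization map. -/
open Ideal

/-- The `q`-th bracket power `J^{[q]}` of an ideal: the ideal generated by
the `q`-th powers of the elements of `J`. -/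
def bracketPow {R : Type*} [CommRing R] (J : Ideal R) (q : ℕ) : Ideal R :=
  Ideal.span ((fun x => x ^ q) '' (J : Set R))

/-- The ideal `b^{[1/q]}`: the smallest ideal `J` with `b ⊆ J^{[q]}`
(realized as the intersection of all such ideals). -/
def frobRoot {R : Type*} [CommRing R] (b : Ideal R) (q : ℕ) : Ideal R :=
  sInf {J : Ideal R | b ≤ bracketPow J q}

/-- The generalized test ideal `τ(a^c) = ⋃_{e ≥ 1} (a^{⌈c p^e⌉})^{[1/p^e]}`. -/
noncomputable def testIdeal {R : Type*} [CommRing R] (p : ℕ) (a : Ideal R) (c : ℝ) : Ideal R :=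
  ⨆ e : ℕ, frobRoot (a ^ ⌈c * (p : ℝ) ^ (e + 1)⌉₊) (p ^ (e + 1))

/-- `ν_a^J(q)`: the largest nonnegative integer `r` with `a^r ⊄ J^{[q]}`
(and `0` if there is no such `r`). -/
noncomputable def nuF {R : Type*} [CommRing R] (a J : Ideal R) (q : ℕ) : ℕ :=
  sSup {r : ℕ | ¬ a ^ r ≤ bracketPow J q}

/-- The F-threshold `c^J(a) = sup_{e ≥ 1} ν_a^J(p^e)/p^e`. -/
noncomputable def FThreshold {R : Type*} [CommRing R] (p : ℕ) (a J : Ideal R) : ℝ :=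
  ⨆ e : ℕ, (nuF a J (p ^ (e + 1)) : ℝ) / (p : ℝ) ^ (e + 1)

/-- `α > 0` is an F-jumping exponent of `a` if `τ(a^α) ≠ τ(a^c)` for all `0 ≤ c < α`. -/
def IsFJumpingExponent {R : Type*} [CommRing R] (p : ℕ) (a : Ideal R) (α : ℝ) : Prop :=
  0 < α ∧ ∀ c : ℝ, 0 ≤ c → c < α → testIdeal p a c ≠ testIdeal p a α

/-! ### Auxiliary lemmas about projective modules -/

section ProjAux

variable {R : Type*} [CommRing R]

private lemma finsupp_mem_smul_top_iff {ι : Type*} (J : Ideal R) (v : ι →₀ R) :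
    v ∈ J • (⊤ : Submodule R (ι →₀ R)) ↔ ∀ i, v i ∈ J := by
  constructor
  · intro hv
    refine Submodule.smul_induction_on hv (fun r hr n _ i => ?_) (fun x y hx hy i => ?_)
    · simp only [Finsupp.smul_apply, smul_eq_mul]
      exact J.mul_mem_right _ hr
    · simpa using J.add_mem (hx i) (hy i)
  · intro hv
    rw [← Finsupp.sum_single v, Finsupp.sum]
    refine Submodule.sum_mem _ fun i _ => ?_
    rw [← Finsupp.smul_single_one]
    exact Submodule.smul_mem_smul (hv i) Submodule.mem_top

variable {M : Type*} [AddCommGroup M] [Module R M] [Module.Projective R M]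

private lemma mem_smul_top_sInf_of_projective (𝒮 : Set (Ideal R)) {t : M}
    (ht : ∀ J ∈ 𝒮, t ∈ J • (⊤ : Submodule R M)) :
    t ∈ (sInf 𝒮) • (⊤ : Submodule R M) := by
  obtain ⟨s, hs⟩ := Module.Projective.out (R := R) (P := M)
  set π : (M →₀ R) →ₗ[R] M := Finsupp.linearCombination R (id : M → M) with hπ
  have key : ∀ (J : Ideal R) (x : M), x ∈ J • (⊤ : Submodule R M) →
      s x ∈ J • (⊤ : Submodule R (M →₀ R)) := by
    intro J x hx
    have h1 : s x ∈ Submodule.map s (J • (⊤ : Submodule R M)) := Submodule.mem_map_of_mem hx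
    rw [Submodule.map_smul''] at h1
    exact Submodule.smul_mono le_rfl le_top h1
  have h1 : s t ∈ (sInf 𝒮) • (⊤ : Submodule R (M →₀ R)) := by
    rw [finsupp_mem_smul_top_iff]
    intro i
    rw [Submodule.mem_sInf]
    intro J hJ
    exact (finsupp_mem_smul_top_iff J (s t)).mp (key J t (ht J hJ)) i
  have h2 : π (s t) ∈ Submodule.map π ((sInf 𝒮) • (⊤ : Submodule R (M →₀ R))) :=
    Submodule.mem_map_of_mem h1
  rw [Submodule.map_smul''] at h2
  have h3 : π (s t) = t := hs t
  rw [h3] at h2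
  exact Submodule.smul_mono le_rfl le_top h2

private lemma mem_smul_top_colon_of_projective (J : Ideal R) (w : R) {t : M}
    (ht : w • t ∈ J • (⊤ : Submodule R M)) :
    t ∈ (J.colon (Ideal.span {w})) • (⊤ : Submodule R M) := by
  obtain ⟨s, hs⟩ := Module.Projective.out (R := R) (P := M)
  set π : (M →₀ R) →ₗ[R] M := Finsupp.linearCombination R (id : M → M) with hπ
  have h1 : s (w • t) ∈ J • (⊤ : Submodule R (M →₀ R)) := by
    have h1 : s (w • t) ∈ Submodule.map s (J • (⊤ : Submodule R M)) := Submodule.mem_map_of_mem ht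
    rw [Submodule.map_smul''] at h1
    exact Submodule.smul_mono le_rfl le_top h1
  rw [map_smul] at h1
  have h2 : s t ∈ (J.colon (Ideal.span {w})) • (⊤ : Submodule R (M →₀ R)) := by
    rw [finsupp_mem_smul_top_iff]
    intro i
    rw [Ideal.mem_colon_span_singleton, mul_comm]
    have := (finsupp_mem_smul_top_iff J (w • s t)).mp h1 i
    simpa using this
  have h3 : π (s t) ∈ Submodule.map π ((J.colon (Ideal.span {w})) • (⊤ : Submodule R (M →₀ R))) :=
    Submodule.mem_map_of_mem h2
  rw [Submodule.map_smul''] at h3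
  have h4 : π (s t) = t := hs t
  rw [h4] at h3
  exact Submodule.smul_mono le_rfl le_top h3

end ProjAux

section MapAux

variable {R T : Type*} [CommRing R] [CommRing T]

private lemma mem_map_iff_mem_smul_top (φ : R →+* T) (J : Ideal R) (x : T) :
    letI := φ.toAlgebra
    (x ∈ Ideal.map φ J ↔ x ∈ J • (⊤ : Submodule R T)) := by
  letI := φ.toAlgebra
  rw [Ideal.smul_top_eq_map, Submodule.restrictScalars_mem, RingHom.algebraMap_toAlgebra]

private lemma mem_map_sInf_of_projective (φ : R →+* T)
    (hproj : letI := φ.toAlgebra; Module.Projective R T)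
    (𝒮 : Set (Ideal R)) {x : T} (hx : ∀ J ∈ 𝒮, x ∈ Ideal.map φ J) :
    x ∈ Ideal.map φ (sInf 𝒮) := by
  letI := φ.toAlgebra
  haveI := hproj
  rw [mem_map_iff_mem_smul_top φ]
  exact mem_smul_top_sInf_of_projective 𝒮 fun J hJ =>
    (mem_map_iff_mem_smul_top φ J x).mp (hx J hJ)

private lemma mem_map_colon_of_projective (φ : R →+* T)
    (hproj : letI := φ.toAlgebra; Module.Projective R T)
    (J : Ideal R) (w : R) {x : T} (hx : φ w * x ∈ Ideal.map φ J) :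
    x ∈ Ideal.map φ (J.colon (Ideal.span {w})) := by
  letI := φ.toAlgebra
  haveI := hproj
  rw [mem_map_iff_mem_smul_top φ]
  refine mem_smul_top_colon_of_projective J w ?_
  have h1 : w • x = φ w * x := by
    rw [Algebra.smul_def, RingHom.algebraMap_toAlgebra]
  rw [h1]
  exact (mem_map_iff_mem_smul_top φ J _).mp hx

/-- A finite flat ring hom out of a Noetherian ring makes the target a projective module. -/
private lemma projective_of_finite_flat [IsNoetherianRing R] (φ : R →+* T)
    (hfin : φ.Finite) (hflat : φ.Flat) :
    letI := φ.toAlgebra; Module.Projective R T := by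
  letI := φ.toAlgebra
  haveI : Module.Finite R T := hfin
  haveI : Module.Flat R T := hflat
  haveI : Module.FinitePresentation R T := Module.finitePresentation_of_finite R T
  exact Module.freeLocus_eq_univ_iff.mp Module.freeLocus_eq_univ

end MapAux

/-! ### Bracket powers as extensions along the iterated Frobenius -/

section BracketAux

private lemma bracketPow_eq_map {A : Type*} [CommRing A] (p : ℕ) [Fact p.Prime] [CharP A p]
    (e : ℕ) (J : Ideal A) :
    bracketPow J (p ^ e) = Ideal.map (iterateFrobenius A p e) J := by
  unfold bracketPow Ideal.map
  congr 1

private lemma map_bracketPow {A B : Type*} [CommRing A] [CommRing B] (p : ℕ) [Fact p.Prime]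
    [CharP A p] [CharP B p] (f : A →+* B) (e : ℕ) (J : Ideal A) :
    Ideal.map f (bracketPow J (p ^ e)) = bracketPow (Ideal.map f J) (p ^ e) := by
  rw [bracketPow_eq_map, bracketPow_eq_map, Ideal.map_map, Ideal.map_map]
  congr 1
  ext x
  simp only [RingHom.comp_apply, iterateFrobenius_def, map_pow]

private lemma iterateFrobenius_finite_flat {R : Type*} [CommRing R] (p : ℕ) [Fact p.Prime]
    [CharP R p] (hfin : (frobenius R p).Finite) (hflat : (frobenius R p).Flat) (e : ℕ) :
    (iterateFrobenius R p e).Finite ∧ (iterateFrobenius R p e).Flat := by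
  induction e with
  | zero =>
    rw [iterateFrobenius_zero]
    constructor
    · exact RingHom.Finite.id R
    · have h : RingHom.Flat (1 : R →+* R) := RingHom.Flat.id (R := R)
      simpa [RingHom.one_def] using h
  | succ n ih =>
    have heq : iterateFrobenius R p (n + 1) = (iterateFrobenius R p n).comp (frobenius R p) := by
      rw [← iterateFrobenius_one R p]
      exact iterateFrobenius_add R p n 1
    rw [heq]
    haveI := ih.2
    haveI := hflat
    exact ⟨RingHom.Finite.comp ih.1 hfin, RingHom.Flat.comp hflat ih.2⟩

/-- The key property of `frobRoot`: `b ≤ (b^{[1/q]})^{[q]}`, valid when the Frobenius is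
finite and flat and the ring is Noetherian. -/
private lemma le_bracketPow_frobRoot {R : Type*} [CommRing R] [IsNoetherianRing R] (p : ℕ)
    [Fact p.Prime] [CharP R p] (hfin : (frobenius R p).Finite) (hflat : (frobenius R p).Flat)
    (b : Ideal R) (e : ℕ) :
    b ≤ bracketPow (frobRoot b (p ^ e)) (p ^ e) := by
  obtain ⟨hf, hfl⟩ := iterateFrobenius_finite_flat p hfin hflat e
  have hproj := projective_of_finite_flat (iterateFrobenius R p e) hf hfl
  intro x hx
  rw [bracketPow_eq_map]
  unfold frobRoot
  refine mem_map_sInf_of_projective _ hproj _ fun J hJ => ?_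
  rw [← bracketPow_eq_map]
  exact hJ hx

end BracketAux

/-! ### Finiteness and flatness of the Frobenius descend to localizations -/

section LocTransfer

/-- Abstract transfer: if `B` is (as a module over `R` through `g ∘ φ`) the localization of
`T` at `S`, with `A` the localization of `R` at `S` and `ρ : A → B` compatible, then
finiteness and flatness of `φ` transfer to `ρ`. -/
private lemma finite_flat_of_isLocalizedModule
    {R T A B : Type*} [CommRing R] [CommRing T] [CommRing A] [CommRing B]
    [Algebra R A] (S : Submonoid R) [IsLocalization S A]
    (φ : R →+* T) (g : T →+* B) (ρ : A →+* B)
    (hcomm : ρ.comp (algebraMap R A) = g.comp φ)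
    (hsurj : ∀ y : B, ∃ (t : T) (s : S), ρ (algebraMap R A s) * y = g t)
    (heq : ∀ t t' : T, g t = g t' → ∃ s : S, φ s * t = φ s * t')
    (hfin : φ.Finite) (hflat : φ.Flat) : ρ.Finite ∧ ρ.Flat := by
  letI : Algebra R T := φ.toAlgebra
  letI : Algebra T B := g.toAlgebra
  letI : Algebra A B := ρ.toAlgebra
  letI : Algebra R B := (g.comp φ).toAlgebra
  haveI : IsScalarTower R T B := IsScalarTower.of_algebraMap_eq' rfl
  haveI : IsScalarTower R A B := IsScalarTower.of_algebraMap_eq' hcomm.symm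
  set ℓ : T →ₗ[R] B := (IsScalarTower.toAlgHom R T B).toLinearMap with hℓ
  have hℓ_apply : ∀ t : T, ℓ t = g t := fun t => rfl
  have hsmulB : ∀ (r : R) (y : B), r • y = ρ (algebraMap R A r) * y := by
    intro r y
    rw [Algebra.smul_def]
    have : algebraMap R B r = ρ (algebraMap R A r) := by
      rw [show (algebraMap R B : R →+* B) = ρ.comp (algebraMap R A) from hcomm.symm]
      rfl
    rw [this]
  haveI hLM : IsLocalizedModule S ℓ := by
    constructor
    · intro s
      rw [Module.End.isUnit_iff]
      have hcoe : ⇑(algebraMap R (Module.End R B) (s : R)) = fun y : B => (s : R) • y :=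
        funext fun y => rfl
      rw [hcoe]
      have hu : IsUnit (ρ (algebraMap R A (s : R))) :=
        (IsLocalization.map_units A s).map ρ
      constructor
      · intro a b hab
        simp only [hsmulB] at hab
        exact hu.mul_left_cancel hab
      · intro y
        refine ⟨↑hu.unit⁻¹ * y, ?_⟩
        show (s : R) • ((↑hu.unit⁻¹ : B) * y) = y
        rw [hsmulB, ← mul_assoc, IsUnit.mul_val_inv, one_mul]
    · intro y
      obtain ⟨t, s, hts⟩ := hsurj y
      refine ⟨(t, s), ?_⟩
      show (s : R) • y = ℓ t
      rw [hsmulB, hℓ_apply]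
      exact hts
    · intro t t' h
      obtain ⟨s, hs⟩ := heq t t' ((hℓ_apply t) ▸ (hℓ_apply t') ▸ h)
      exact ⟨s, hs⟩
  have hbc : IsBaseChange A ℓ := (isLocalizedModule_iff_isBaseChange S A ℓ).mp hLM
  haveI : Module.Finite R T := hfin
  haveI : Module.Flat R T := hflat
  have hfb : Module.Finite A B := Module.Finite.equiv hbc.equiv
  have hflb : Module.Flat A B :=
    Module.Flat.of_linearEquiv hbc.equiv.symm
  exact ⟨hfb, hflb⟩

end LocTransfer

/-- test ideals commute with localization. -/
theorem stmt6_testIdeal_localization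
    {R : Type*} [CommRing R] [IsNoetherianRing R] (p : ℕ) [Fact p.Prime] [CharP R p]
    (hfin : (frobenius R p).Finite) (hflat : (frobenius R p).Flat)
    (S : Submonoid R) (Rs : Type*) [CommRing Rs] [CharP Rs p] [Algebra R Rs]
    [IsLocalization S Rs] :
    (frobenius Rs p).Finite ∧ (frobenius Rs p).Flat ∧
      ∀ (a : Ideal R) (c : ℝ), 0 ≤ c →
        testIdeal p (a.map (algebraMap R Rs)) c =
          (testIdeal p a c).map (algebraMap R Rs) := by
  have hppos : 0 < p := (Fact.out : p.Prime).pos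
  have hcomm : (frobenius Rs p).comp (algebraMap R Rs) =
      (algebraMap R Rs).comp (frobenius R p) := by
    ext x
    simp only [RingHom.comp_apply, frobenius_def, map_pow]
  have hsurj : ∀ y : Rs, ∃ (t : R) (s : S),
      (frobenius Rs p) (algebraMap R Rs s) * y = (algebraMap R Rs) t := by
    intro y
    obtain ⟨⟨r, s⟩, h⟩ := IsLocalization.surj S y
    refine ⟨r * (s : R) ^ (p - 1), s, ?_⟩
    have hps : (s : R) ^ p = (s : R) ^ (p - 1) * s := by
      rw [← pow_succ, Nat.sub_add_cancel hppos]
    have h1 : (frobenius Rs p) (algebraMap R Rs s) = (algebraMap R Rs) ((s : R) ^ p) := by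
      rw [frobenius_def, map_pow]
    rw [h1, hps, _root_.map_mul, mul_assoc, mul_comm ((algebraMap R Rs) (s : R)) y, h,
      ← _root_.map_mul, mul_comm ((s : R) ^ (p - 1)) r]
  have heqq : ∀ t t' : R, (algebraMap R Rs) t = (algebraMap R Rs) t' →
      ∃ s : S, (frobenius R p) s * t = (frobenius R p) s * t' := by
    intro t t' h
    obtain ⟨c, hc⟩ := (IsLocalization.eq_iff_exists S Rs).mp h
    refine ⟨c, ?_⟩
    have hps : (c : R) ^ p = (c : R) ^ (p - 1) * c := by
      rw [← pow_succ, Nat.sub_add_cancel hppos]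
    rw [frobenius_def, hps, mul_assoc, mul_assoc, hc]
  obtain ⟨hfinRs, hflatRs⟩ := finite_flat_of_isLocalizedModule S (frobenius R p)
    (algebraMap R Rs) (frobenius Rs p) hcomm hsurj heqq hfin hflat
  refine ⟨hfinRs, hflatRs, ?_⟩
  haveI : IsNoetherianRing Rs := IsLocalization.isNoetherianRing S Rs ‹IsNoetherianRing R›
  have key : ∀ (b : Ideal R) (e : ℕ),
      Ideal.map (algebraMap R Rs) (frobRoot b (p ^ e)) =
        frobRoot (Ideal.map (algebraMap R Rs) b) (p ^ e) := by
    intro b e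
    obtain ⟨hfR, hflR⟩ := iterateFrobenius_finite_flat p hfin hflat e
    have hproj := projective_of_finite_flat (iterateFrobenius R p e) hfR hflR
    apply le_antisymm
    · rw [Ideal.map_le_iff_le_comap]
      set J' : Ideal Rs := frobRoot (Ideal.map (algebraMap R Rs) b) (p ^ e) with hJ'
      set J : Ideal R := Ideal.comap (algebraMap R Rs) J' with hJdef
      have hstar' : Ideal.map (algebraMap R Rs) b ≤ bracketPow J' (p ^ e) :=
        le_bracketPow_frobRoot p hfinRs hflatRs _ e
      unfold frobRoot
      refine sInf_le ?_
      show b ≤ bracketPow J (p ^ e)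
      intro x hx
      have hfx : (algebraMap R Rs) x ∈ bracketPow J' (p ^ e) :=
        hstar' (Ideal.mem_map_of_mem _ hx)
      have hJ'eq : Ideal.map (algebraMap R Rs) J = J' := IsLocalization.map_comap S Rs J'
      rw [← hJ'eq, ← map_bracketPow] at hfx
      rw [← IsLocalization.mk'_one (M := S) Rs x] at hfx
      obtain ⟨w, hwS, hwx⟩ :=
        (IsLocalization.mk'_mem_map_algebraMap_iff (M := S) (S := Rs) _ x 1).mp hfx
      have hq1 : 1 ≤ p ^ e := Nat.one_le_pow e p hppos
      have hw2 : w ^ (p ^ e) * x ∈ bracketPow J (p ^ e) := by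
        have h2 : w ^ (p ^ e) * x = w ^ (p ^ e - 1) * (w * x) := by
          rw [← mul_assoc, ← pow_succ, Nat.sub_add_cancel hq1]
        rw [h2]
        exact Ideal.mul_mem_left _ _ hwx
      rw [bracketPow_eq_map] at hw2 ⊢
      have hw3 : (iterateFrobenius R p e) w * x ∈ Ideal.map (iterateFrobenius R p e) J := by
        rwa [iterateFrobenius_def]
      have hw4 := mem_map_colon_of_projective _ hproj J w hw3
      have hcolon : J.colon (Ideal.span {w}) = J := by
        apply le_antisymm
        · intro z hz
          rw [Ideal.mem_colon_span_singleton] at hz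
          have hzw : (algebraMap R Rs) (z * w) ∈ J' := Ideal.mem_comap.mp hz
          have hu : IsUnit ((algebraMap R Rs) w) := IsLocalization.map_units Rs ⟨w, hwS⟩
          have hz2 : (algebraMap R Rs) z ∈ J' := by
            rw [_root_.map_mul, mul_comm] at hzw
            exact (Ideal.unit_mul_mem_iff_mem J' hu).mp hzw
          exact Ideal.mem_comap.mpr hz2
        · intro z hz
          rw [Ideal.mem_colon_span_singleton]
          exact Ideal.mul_mem_right w _ hz
      rwa [hcolon] at hw4
    · unfold frobRoot
      refine sInf_le ?_
      show Ideal.map (algebraMap R Rs) b ≤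
        bracketPow (Ideal.map (algebraMap R Rs) (frobRoot b (p ^ e))) (p ^ e)
      rw [← map_bracketPow]
      exact Ideal.map_mono (le_bracketPow_frobRoot p hfin hflat b e)
  intro a c _
  unfold testIdeal
  rw [Ideal.map_iSup]
  refine iSup_congr fun e => ?_
  rw [key, Ideal.map_pow]
end

section
/- Let R be a commutative Noetherian ring of prime characteristic p whose Frobenius endomorphism is finite and flat, and let a ⊆ b be ideals of R such that there exists a nonnegative integer m with b^{m+ℓ} ⊆ a^ℓ for every nonnegative integer ℓ (these hypotheses hold in particular when b is the integral closure of a). Then τ(a^c) = τ(b^c) for every real number c ≥ 0. -/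
open Ideal

section FrobeniusAux

universe u

variable {R : Type u} [CommRing R] {p : ℕ} [Fact p.Prime] [CharP R p]

/- ### Elementary facts about `bracketPow` -/

lemma bracketPow_mono {q : ℕ} {J K : Ideal R} (h : J ≤ K) :
    bracketPow J q ≤ bracketPow K q :=
  Ideal.span_mono (Set.image_mono h)

lemma bracketPow_le_pow {q : ℕ} (J : Ideal R) : bracketPow J q ≤ J ^ q := by
  rw [bracketPow, Ideal.span_le]
  rintro _ ⟨x, hx, rfl⟩
  exact Ideal.pow_mem_pow hx q

lemma bracketPow_le_self {q : ℕ} (hq : q ≠ 0) (J : Ideal R) : bracketPow J q ≤ J :=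
  (bracketPow_le_pow J).trans (Ideal.pow_le_self hq)

lemma bracketPow_top {q : ℕ} : bracketPow (⊤ : Ideal R) q = ⊤ :=
  Ideal.eq_top_iff_one _ |>.mpr <| Ideal.subset_span ⟨1, trivial, one_pow q⟩

lemma bracketPow_eq_map_s11 (J : Ideal R) (n : ℕ) :
    bracketPow J (p ^ n) = J.map (iterateFrobenius R p n) := by
  have himage : (fun x : R => x ^ p ^ n) = ⇑(iterateFrobenius R p n) := by
    funext x; rw [iterateFrobenius_def]
  unfold bracketPow Ideal.map
  rw [himage]

lemma bracketPow_mul (I J : Ideal R) (n : ℕ) :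
    bracketPow (I * J) (p ^ n) = bracketPow I (p ^ n) * bracketPow J (p ^ n) := by
  rw [bracketPow_eq_map_s11, bracketPow_eq_map_s11, bracketPow_eq_map_s11, Ideal.map_mul]

lemma bracketPow_bracketPow (J : Ideal R) (a b : ℕ) :
    bracketPow (bracketPow J (p ^ a)) (p ^ b) = bracketPow J (p ^ (a + b)) := by
  rw [Nat.add_comm a b, bracketPow_eq_map_s11 J, bracketPow_eq_map_s11, bracketPow_eq_map_s11,
    Ideal.map_map, ← iterateFrobenius_add]

/- ### Elementary facts about `frobRoot` -/

lemma frobRoot_mono {q : ℕ} {K K' : Ideal R} (h : K ≤ K') :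
    frobRoot K q ≤ frobRoot K' q :=
  sInf_le_sInf fun _ hJ => h.trans hJ

lemma le_frobRoot_self {q : ℕ} (hq : q ≠ 0) (K : Ideal R) : K ≤ frobRoot K q :=
  le_sInf fun _ hJ => hJ.trans (bracketPow_le_self hq _)

lemma frobRoot_top {q : ℕ} (hq : q ≠ 0) : frobRoot (⊤ : Ideal R) q = ⊤ :=
  le_antisymm le_top (le_sInf fun _ hJ => hJ.trans (bracketPow_le_self hq _))

/- ### The Frobenius twist of `R`, as an `R`-algebra -/

/-- Type synonym: `R` viewed as an `R`-algebra through the `n`-th iterate of Frobenius. -/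
def FrobTwist (R : Type u) (p n : ℕ) : Type u := R

instance {n : ℕ} : CommRing (FrobTwist R p n) := inferInstanceAs (CommRing R)

instance {n : ℕ} : Algebra R (FrobTwist R p n) :=
  (show R →+* FrobTwist R p n from iterateFrobenius R p n).toAlgebra

/-- The identity map `R → FrobTwist R p n`, as a ring homomorphism. -/
def FrobTwist.inj {R : Type u} [CommRing R] {p n : ℕ} : R →+* FrobTwist R p n :=
  RingHom.id R

/-- The identity map `FrobTwist R p n → R`, as a ring homomorphism. -/
def FrobTwist.out {R : Type u} [CommRing R] {p n : ℕ} : FrobTwist R p n →+* R :=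
  RingHom.id R

lemma FrobTwist.algebraMap_eq {n : ℕ} (x : R) :
    algebraMap R (FrobTwist R p n) x = FrobTwist.inj (x ^ p ^ n) := by
  rw [RingHom.algebraMap_toAlgebra]
  rfl

lemma FrobTwist.out_smul {n : ℕ} (c : R) (t : FrobTwist R p n) :
    FrobTwist.out (c • t) = c ^ p ^ n * FrobTwist.out t := by
  rw [Algebra.smul_def, FrobTwist.algebraMap_eq, _root_.map_mul]
  rfl

private theorem iterFrob_finite (hfin : (frobenius R p).Finite) :
    ∀ n, (iterateFrobenius R p n).Finite
  | 0 => by rw [iterateFrobenius_zero]; exact RingHom.Finite.id R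
  | n + 1 => by
      have h := iterateFrobenius_add R p n 1
      rw [iterateFrobenius_one] at h
      rw [h]
      exact (iterFrob_finite hfin n).comp hfin

private theorem iterFrob_flat (hflat : (frobenius R p).Flat) :
    ∀ n, (iterateFrobenius R p n).Flat
  | 0 => by
      rw [iterateFrobenius_zero, ← RingHom.one_def]
      exact RingHom.Flat.id R
  | n + 1 => by
      have h := iterateFrobenius_add R p n 1
      rw [iterateFrobenius_one] at h
      rw [h]
      haveI := iterFrob_flat hflat n
      haveI := hflat
      exact hflat.comp (iterFrob_flat hflat n)

private theorem frobTwist_finite (hfin : (frobenius R p).Finite) (n : ℕ) :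
    Module.Finite R (FrobTwist R p n) :=
  iterFrob_finite hfin n

private theorem frobTwist_flat (hflat : (frobenius R p).Flat) (n : ℕ) :
    Module.Flat R (FrobTwist R p n) :=
  (iterFrob_flat hflat n)

private theorem frobTwist_projective [IsNoetherianRing R]
    (hfin : (frobenius R p).Finite) (hflat : (frobenius R p).Flat) (n : ℕ) :
    Module.Projective R (FrobTwist R p n) := by
  haveI := frobTwist_finite hfin n
  haveI := frobTwist_flat hflat n
  haveI := Module.finitePresentation_of_finite R (FrobTwist R p n)
  rw [← Module.freeLocus_eq_univ_iff]
  exact Module.freeLocus_eq_univ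

/- ### The key structural package for `frobRoot` at `p`-power levels -/

/-- Main structural theorem: `K ⊆ (K^{[1/q]})^{[q]}`, together with the projection
formula `I · K^{[1/q]} ⊆ J` whenever `I^{[q]} · K ⊆ J^{[q]}`. -/
theorem frobRoot_pack [IsNoetherianRing R]
    (hfin : (frobenius R p).Finite) (hflat : (frobenius R p).Flat) (n : ℕ) :
    (∀ K : Ideal R, K ≤ bracketPow (frobRoot K (p ^ n)) (p ^ n)) ∧
      (∀ I K J : Ideal R, bracketPow I (p ^ n) * K ≤ bracketPow J (p ^ n) →
        I * frobRoot K (p ^ n) ≤ J) := by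
  obtain ⟨s, hs⟩ := Module.projective_def.mp (frobTwist_projective hfin hflat n)
  -- closure of `J • ⊤` under multiplication
  have Nmul : ∀ (J : Ideal R) (v : FrobTwist R p n),
      ∀ u ∈ J • (⊤ : Submodule R (FrobTwist R p n)),
      v * u ∈ J • (⊤ : Submodule R (FrobTwist R p n)) := by
    intro J v u hu
    refine Submodule.smul_induction_on hu (fun r hr t _ => ?_) (fun x y hx hy => ?_)
    · rw [mul_smul_comm]
      exact Submodule.smul_mem_smul hr Submodule.mem_top
    · rw [mul_add]
      exact Submodule.add_mem _ hx hy
  -- the coefficient lemma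
  have coeff : ∀ (J : Ideal R) (z : R), z ∈ bracketPow J (p ^ n) →
      ∀ y : FrobTwist R p n, s (FrobTwist.inj z) y ∈ J := by
    intro J z hz y
    have hzN : FrobTwist.inj z ∈ J • (⊤ : Submodule R (FrobTwist R p n)) := by
      rw [bracketPow] at hz
      refine Submodule.span_induction
        (p := fun w _ => FrobTwist.inj w ∈ J • (⊤ : Submodule R (FrobTwist R p n)))
        (fun w hw => ?_) ?_ (fun u v _ _ hu hv => ?_) (fun r u _ hu => ?_) hz
      · obtain ⟨w₀, hw₀, rfl⟩ := hw
        show FrobTwist.inj (w₀ ^ p ^ n) ∈ _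
        have he : FrobTwist.inj (w₀ ^ p ^ n) = w₀ • (1 : FrobTwist R p n) := by
          rw [Algebra.smul_def, FrobTwist.algebraMap_eq, mul_one]
        rw [he]
        exact Submodule.smul_mem_smul hw₀ Submodule.mem_top
      · show FrobTwist.inj (0 : R) ∈ _
        rw [map_zero]
        exact Submodule.zero_mem _
      · show FrobTwist.inj (u + v) ∈ _
        rw [map_add]
        exact Submodule.add_mem _ hu hv
      · show FrobTwist.inj (r • u) ∈ _
        rw [smul_eq_mul, _root_.map_mul]
        exact Nmul J _ _ hu
    refine Submodule.smul_induction_on hzN (fun r hr t _ => ?_) (fun u v hu hv => ?_)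
    · rw [map_smul, Finsupp.smul_apply, smul_eq_mul]
      exact Ideal.mul_mem_right _ _ hr
    · rw [map_add, Finsupp.add_apply]
      exact Ideal.add_mem _ hu hv
  -- identification of `frobRoot K` with the span of the coefficients of `K`
  have main : ∀ K : Ideal R,
      frobRoot K (p ^ n) =
        Ideal.span {c : R | ∃ x ∈ K, ∃ y : FrobTwist R p n, s (FrobTwist.inj x) y = c} ∧
        K ≤ bracketPow (frobRoot K (p ^ n)) (p ^ n) := by
    intro K
    set J₀ : Ideal R :=
      Ideal.span {c : R | ∃ x ∈ K, ∃ y : FrobTwist R p n, s (FrobTwist.inj x) y = c} with hJ₀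
    have hKJ₀ : K ≤ bracketPow J₀ (p ^ n) := by
      intro x hx
      have h2 : x = ∑ y ∈ (s (FrobTwist.inj x)).support,
          (s (FrobTwist.inj x)) y ^ p ^ n * FrobTwist.out y := by
        have hrep := hs (FrobTwist.inj x)
        rw [Finsupp.linearCombination_apply, Finsupp.sum] at hrep
        have hout := congrArg (FrobTwist.out (R := R) (p := p) (n := n)) hrep
        rw [map_sum] at hout
        have hox : FrobTwist.out (p := p) (n := n) (FrobTwist.inj x) = x := rfl
        rw [hox] at hout
        refine hout.symm.trans (Finset.sum_congr rfl fun y _ => ?_)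
        rw [id_eq, FrobTwist.out_smul]
      rw [h2]
      refine Ideal.sum_mem _ fun y _ => Ideal.mul_mem_right _ _ ?_
      have hc : (s (FrobTwist.inj x)) y ∈ J₀ := Ideal.subset_span ⟨x, hx, y, rfl⟩
      exact Ideal.subset_span ⟨_, hc, rfl⟩
    have hmin : ∀ J : Ideal R, K ≤ bracketPow J (p ^ n) → J₀ ≤ J := by
      intro J hJ
      rw [hJ₀, Ideal.span_le]
      rintro _ ⟨x, hxK, y, rfl⟩
      exact coeff J x (hJ hxK) y
    have heq : frobRoot K (p ^ n) = J₀ := le_antisymm (sInf_le hKJ₀) (le_sInf hmin)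
    exact ⟨heq, heq ▸ hKJ₀⟩
  refine ⟨fun K => (main K).2, fun I K J h => ?_⟩
  rw [(main K).1, Ideal.mul_le]
  intro i hi d hd
  refine Submodule.span_induction (p := fun d _ => i * d ∈ J) (fun cc hcc => ?_) ?_
    (fun u v _ _ hu hv => ?_) (fun r u _ hu => ?_) hd
  · obtain ⟨x, hxK, y, rfl⟩ := hcc
    have hmem : (i ^ p ^ n * x : R) ∈ bracketPow J (p ^ n) :=
      h (Ideal.mul_mem_mul (Ideal.subset_span ⟨i, hi, rfl⟩) hxK)
    have e1 : FrobTwist.inj (i ^ p ^ n * x) = i • FrobTwist.inj (p := p) (n := n) x := by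
      rw [Algebra.smul_def, FrobTwist.algebraMap_eq, _root_.map_mul]
    have e2 : i * (s (FrobTwist.inj x)) y = (s (FrobTwist.inj (i ^ p ^ n * x))) y := by
      rw [e1, map_smul, Finsupp.smul_apply, smul_eq_mul]
    rw [e2]
    exact coeff J _ hmem y
  · show i * (0 : R) ∈ J
    rw [mul_zero]
    exact J.zero_mem
  · show i * (u + v) ∈ J
    rw [mul_add]
    exact J.add_mem hu hv
  · show i * (r • u) ∈ J
    rw [smul_eq_mul, mul_left_comm]
    exact Ideal.mul_mem_left _ _ hu

/- ### Consequences of the package -/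

variable [IsNoetherianRing R]

theorem frobRoot_spec (hfin : (frobenius R p).Finite) (hflat : (frobenius R p).Flat)
    (n : ℕ) (K : Ideal R) : K ≤ bracketPow (frobRoot K (p ^ n)) (p ^ n) :=
  (frobRoot_pack hfin hflat n).1 K

theorem frobRoot_comp (hfin : (frobenius R p).Finite) (hflat : (frobenius R p).Flat)
    (a b : ℕ) (K : Ideal R) :
    frobRoot K (p ^ (a + b)) = frobRoot (frobRoot K (p ^ b)) (p ^ a) := by
  refine le_antisymm (sInf_le ?_) (le_sInf fun J hJ => ?_)
  · show K ≤ bracketPow (frobRoot (frobRoot K (p ^ b)) (p ^ a)) (p ^ (a + b))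
    rw [← bracketPow_bracketPow _ a b]
    exact (frobRoot_spec hfin hflat b K).trans
      (bracketPow_mono (frobRoot_spec hfin hflat a _))
  · refine sInf_le ?_
    show frobRoot K (p ^ b) ≤ bracketPow J (p ^ a)
    refine sInf_le ?_
    show K ≤ bracketPow (bracketPow J (p ^ a)) (p ^ b)
    rwa [bracketPow_bracketPow]

theorem le_frobRoot_bracketPow (hfin : (frobenius R p).Finite) (hflat : (frobenius R p).Flat)
    (n : ℕ) (I : Ideal R) : I ≤ frobRoot (bracketPow I (p ^ n)) (p ^ n) := by
  refine le_sInf fun J hJ => ?_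
  have h := (frobRoot_pack hfin hflat n).2 I ⊤ J (by rwa [mul_top])
  rwa [frobRoot_top (pow_ne_zero n (Fact.out : p.Prime).ne_zero), mul_top] at h

/-- One step of the standard chain: from level `q = p^n` to level `p^(n+1)`. -/
theorem frobRoot_pow_step (hfin : (frobenius R p).Finite) (hflat : (frobenius R p).Flat)
    (b : Ideal R) {M M' : ℕ} (h : M' ≤ M * p) (n : ℕ) :
    frobRoot (b ^ M) (p ^ n) ≤ frobRoot (b ^ M') (p ^ (n + 1)) := by
  have h1 : b ^ M ≤ frobRoot (bracketPow (b ^ M) (p ^ 1)) (p ^ 1) :=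
    le_frobRoot_bracketPow hfin hflat 1 _
  have h2 : frobRoot (b ^ M) (p ^ n) ≤ frobRoot (bracketPow (b ^ M) (p ^ 1)) (p ^ (n + 1)) := by
    rw [frobRoot_comp hfin hflat n 1]
    exact frobRoot_mono h1
  refine h2.trans (frobRoot_mono ?_)
  refine (bracketPow_le_pow _).trans ?_
  rw [← pow_mul, pow_one]
  exact Ideal.pow_le_pow_right h

/-- The key estimate: if `m ≤ M₁` and `b^(m+ℓ) ⊆ a^ℓ` for all `ℓ`, then for a suitable
`k₀` (independent of `M₁`, `n`) one has
`(b^{M₁})^{[1/pⁿ]} ⊆ (a^{M₂})^{[1/p^(n+k₀)]}` for all `M₂ ≤ M₁ p^{k₀}`. -/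
theorem frobRoot_key (hfin : (frobenius R p).Finite) (hflat : (frobenius R p).Flat)
    {a b : Ideal R} {m : ℕ} (hm : ∀ ℓ : ℕ, b ^ (m + ℓ) ≤ a ^ ℓ) :
    ∃ k₀ : ℕ, ∀ M₁ M₂ n : ℕ, m ≤ M₁ → M₂ ≤ M₁ * p ^ k₀ →
      frobRoot (b ^ M₁) (p ^ n) ≤ frobRoot (a ^ M₂) (p ^ (n + k₀)) := by
  -- the stabilizing chain `X k = (b^m)^{[1/p^k]}`
  have hmonoX : Monotone fun k => frobRoot (b ^ m) (p ^ k) := by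
    refine monotone_nat_of_le_succ fun k => ?_
    have h1 : frobRoot (b ^ m) (p ^ (k + 1)) = frobRoot (frobRoot (b ^ m) (p ^ k)) (p ^ 1) := by
      rw [← frobRoot_comp hfin hflat 1 k, Nat.add_comm 1 k]
    rw [h1]
    exact le_frobRoot_self (pow_ne_zero 1 (Fact.out : p.Prime).ne_zero) _
  obtain ⟨k₀, hk₀⟩ := monotone_stabilizes_iff_noetherian.mpr inferInstance
    ⟨fun k => frobRoot (b ^ m) (p ^ k), hmonoX⟩
  set J : Ideal R := frobRoot (b ^ m) (p ^ k₀) with hJdef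
  -- `J` is a fixed point of `frobRoot · p`, hence idempotent
  have hfix : frobRoot J (p ^ 1) = J := by
    have h1 : frobRoot (b ^ m) (p ^ (k₀ + 1)) = frobRoot J (p ^ 1) := by
      rw [hJdef, ← frobRoot_comp hfin hflat 1 k₀, Nat.add_comm 1 k₀]
    have h2 := hk₀ (k₀ + 1) (Nat.le_succ k₀)
    exact h1 ▸ h2.symm
  have hsq : J ≤ J * J := by
    calc J ≤ bracketPow (frobRoot J (p ^ 1)) (p ^ 1) := frobRoot_spec hfin hflat 1 J
    _ = bracketPow J (p ^ 1) := by rw [hfix]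
    _ ≤ J ^ p ^ 1 := bracketPow_le_pow J
    _ ≤ J ^ 2 := Ideal.pow_le_pow_right (by have := (Fact.out : p.Prime).two_le; simpa using this)
    _ = J * J := sq J
  obtain ⟨r, hr1, hr0⟩ :=
    Submodule.exists_sub_one_mem_and_smul_eq_zero_of_fg_of_le_smul J (J : Submodule R R)
      (IsNoetherian.noetherian _) (by rwa [Ideal.smul_eq_mul])
  have hbmJ : b ^ m ≤ J :=
    (frobRoot_spec hfin hflat k₀ (b ^ m)).trans
      (bracketPow_le_self (pow_ne_zero k₀ (Fact.out : p.Prime).ne_zero) _)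
  have hbm_le : b ^ m ≤ J * b ^ m := by
    intro ξ hξ
    have h0 : r * ξ = 0 := by
      have := hr0 ξ (hbmJ hξ)
      rwa [smul_eq_mul] at this
    have h1r : (1 - r : R) ∈ J := by
      have he : (1 - r : R) = -(r - 1) := by ring
      rw [he]
      exact J.neg_mem hr1
    have hξeq : ξ = (1 - r) * ξ := by
      rw [sub_mul, one_mul, h0, sub_zero]
    rw [hξeq]
    exact Ideal.mul_mem_mul h1r hξ
  refine ⟨k₀, fun M₁ M₂ n hmM₁ hM₂ => ?_⟩
  -- `b^{M₁} ⊆ J · b^{M₁}`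
  have hM₁J : b ^ M₁ ≤ J * b ^ M₁ := by
    calc b ^ M₁ = b ^ (M₁ - m) * b ^ m := by rw [← pow_add, Nat.sub_add_cancel hmM₁]
    _ ≤ b ^ (M₁ - m) * (J * b ^ m) := Ideal.mul_mono_right hbm_le
    _ = J * (b ^ (M₁ - m) * b ^ m) := by ring
    _ = J * b ^ M₁ := by rw [← pow_add, Nat.sub_add_cancel hmM₁]
  -- the projection formula
  have hproj : b ^ M₁ * J ≤
      frobRoot (bracketPow (b ^ M₁) (p ^ k₀) * b ^ m) (p ^ k₀) := by
    rw [hJdef]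
    exact (frobRoot_pack hfin hflat k₀).2 (b ^ M₁) (b ^ m) _ (frobRoot_spec hfin hflat k₀ _)
  have hstep : b ^ M₁ ≤ frobRoot (a ^ M₂) (p ^ k₀) := by
    have hmid : bracketPow (b ^ M₁) (p ^ k₀) * b ^ m ≤ b ^ (m + M₂) := by
      calc bracketPow (b ^ M₁) (p ^ k₀) * b ^ m ≤ (b ^ M₁) ^ p ^ k₀ * b ^ m :=
        Ideal.mul_mono_left (bracketPow_le_pow _)
      _ = b ^ (M₁ * p ^ k₀ + m) := by rw [← pow_mul, ← pow_add]
      _ ≤ b ^ (m + M₂) := Ideal.pow_le_pow_right (by omega)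
    calc b ^ M₁ ≤ J * b ^ M₁ := hM₁J
    _ = b ^ M₁ * J := mul_comm _ _
    _ ≤ frobRoot (bracketPow (b ^ M₁) (p ^ k₀) * b ^ m) (p ^ k₀) := hproj
    _ ≤ frobRoot (b ^ (m + M₂)) (p ^ k₀) := frobRoot_mono hmid
    _ ≤ frobRoot (a ^ M₂) (p ^ k₀) := frobRoot_mono (hm M₂)
  calc frobRoot (b ^ M₁) (p ^ n) ≤ frobRoot (frobRoot (a ^ M₂) (p ^ k₀)) (p ^ n) :=
    frobRoot_mono hstep
  _ = frobRoot (a ^ M₂) (p ^ (n + k₀)) := (frobRoot_comp hfin hflat n k₀ _).symm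

end FrobeniusAux

/-- ideals with the same integral closure have the same test ideals. -/
theorem stmt11_testIdeal_integral_closure
    {R : Type*} [CommRing R] [IsNoetherianRing R] (p : ℕ) [Fact p.Prime] [CharP R p]
    (hfin : (frobenius R p).Finite) (hflat : (frobenius R p).Flat)
    (a b : Ideal R) (hab : a ≤ b) (m : ℕ) (hm : ∀ ℓ : ℕ, b ^ (m + ℓ) ≤ a ^ ℓ)
    (c : ℝ) (hc : 0 ≤ c) :
    testIdeal p a c = testIdeal p b c := by
  have hpne : (p : ℕ) ≠ 0 := (Fact.out : p.Prime).ne_zero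
  rcases hc.eq_or_lt with heq | hc0
  · -- the case `c = 0`
    have hT : ∀ x : Ideal R, testIdeal p x c = ⊤ := by
      intro x
      have hterm : ∀ e : ℕ, frobRoot (x ^ ⌈c * (p : ℝ) ^ (e + 1)⌉₊) (p ^ (e + 1)) = (⊤ : Ideal R) := by
        intro e
        rw [← heq, zero_mul, Nat.ceil_zero, pow_zero, Ideal.one_eq_top,
          frobRoot_top (pow_ne_zero _ hpne)]
      unfold testIdeal
      simp only [hterm, iSup_const]
    rw [hT a, hT b]
  · -- the case `c > 0`
    have hple : 1 < (p : ℝ) := by exact_mod_cast (Fact.out : p.Prime).one_lt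
    have hppos : (0 : ℝ) < (p : ℝ) := by positivity
    -- replace `m` by `m + 1` so that it is positive
    have hm1 : ∀ ℓ : ℕ, b ^ (m + 1 + ℓ) ≤ a ^ ℓ := fun ℓ =>
      (Ideal.pow_le_pow_right (by omega)).trans (hm ℓ)
    -- a ceiling estimate used repeatedly
    have ceil_mul : ∀ (x : ℝ) (k : ℕ), 0 ≤ x → ⌈x * (p : ℝ) ^ k⌉₊ ≤ ⌈x⌉₊ * p ^ k := by
      intro x k hx
      rw [Nat.ceil_le]
      push_cast
      exact mul_le_mul_of_nonneg_right (Nat.le_ceil x) (by positivity)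
    apply le_antisymm
    · -- easy direction
      unfold testIdeal
      exact iSup_mono fun e => frobRoot_mono (Ideal.pow_right_mono hab _)
    · unfold testIdeal
      refine iSup_le fun e => ?_
      -- choose `k₁` so large that `m + 1 ≤ ⌈c p^(e+k₁+1)⌉`
      obtain ⟨k₁, hk₁⟩ := pow_unbounded_of_one_lt ((m + 1 : ℝ) / (c * (p : ℝ) ^ (e + 1))) hple
      have hqpos : (0 : ℝ) < c * (p : ℝ) ^ (e + 1) := by positivity
      have hm1M : ((m + 1 : ℕ) : ℝ) ≤ c * (p : ℝ) ^ (e + k₁ + 1) := by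
        have hpow : (p : ℝ) ^ (e + k₁ + 1) = (p : ℝ) ^ (e + 1) * (p : ℝ) ^ k₁ := by
          rw [show e + k₁ + 1 = (e + 1) + k₁ by omega, pow_add]
        have h2 := (div_lt_iff₀ hqpos).mp hk₁
        rw [hpow]
        push_cast
        nlinarith
      have hm1M' : m + 1 ≤ ⌈c * (p : ℝ) ^ (e + k₁ + 1)⌉₊ := by
        have := hm1M.trans (Nat.le_ceil _)
        exact_mod_cast this
      -- climb the chain from level `e` to level `e + k₁`
      have chain : ∀ k : ℕ,
          frobRoot (b ^ ⌈c * (p : ℝ) ^ (e + 1)⌉₊) (p ^ (e + 1)) ≤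
            frobRoot (b ^ ⌈c * (p : ℝ) ^ (e + k + 1)⌉₊) (p ^ (e + k + 1)) := by
        intro k
        induction k with
        | zero => exact le_rfl
        | succ k ih =>
          refine ih.trans ?_
          have hle : ⌈c * (p : ℝ) ^ (e + (k + 1) + 1)⌉₊ ≤ ⌈c * (p : ℝ) ^ (e + k + 1)⌉₊ * p := by
            have hx : c * (p : ℝ) ^ (e + (k + 1) + 1) =
                (c * (p : ℝ) ^ (e + k + 1)) * (p : ℝ) ^ 1 := by
              rw [show e + (k + 1) + 1 = (e + k + 1) + 1 by omega, pow_succ, pow_one]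
              ring
            rw [hx, pow_one]
            have := ceil_mul (c * (p : ℝ) ^ (e + k + 1)) 1 (by positivity)
            rwa [pow_one, pow_one] at this
          exact frobRoot_pow_step hfin hflat b hle (e + k + 1)
      refine (chain k₁).trans ?_
      -- now apply the key estimate
      obtain ⟨k₀, hkey⟩ := frobRoot_key hfin hflat hm1
      have hM₂ : ⌈c * (p : ℝ) ^ (e + k₁ + k₀ + 1)⌉₊ ≤ ⌈c * (p : ℝ) ^ (e + k₁ + 1)⌉₊ * p ^ k₀ := by
        have hx : c * (p : ℝ) ^ (e + k₁ + k₀ + 1) =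
            (c * (p : ℝ) ^ (e + k₁ + 1)) * (p : ℝ) ^ k₀ := by
          rw [show e + k₁ + k₀ + 1 = (e + k₁ + 1) + k₀ by omega, pow_add]
          ring
        rw [hx]
        exact ceil_mul _ k₀ (by positivity)
      have h := hkey ⌈c * (p : ℝ) ^ (e + k₁ + 1)⌉₊ ⌈c * (p : ℝ) ^ (e + k₁ + k₀ + 1)⌉₊
        (e + k₁ + 1) hm1M' hM₂
      rw [show (e + k₁ + 1) + k₀ = (e + k₁ + k₀) + 1 by omega] at h
      exact h.trans (le_iSup
        (fun e'' => frobRoot (a ^ ⌈c * (p : ℝ) ^ (e'' + 1)⌉₊) (p ^ (e'' + 1))) (e + k₁ + k₀))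
end

section
/- Let R be a commutative Noetherian ring of prime characteristic p whose Frobenius endomorphism is finite and flat, let a be an ideal of R, and let J be an ideal of R whose radical contains a. Then: (1) for every e ≥ 1 and every nonnegative integer r, if a^r ⊄ J^{[p^e]} then a^{pr} ⊄ J^{[p^{e+1}]}; consequently ν_a^J(p^e)/p^e ≤ ν_a^J(p^{e+1})/p^{e+1} for all e ≥ 1; (2) if a can be generated by s elements and ℓ is a positive integer with a^ℓ ⊆ J, then ν_a^J(p^e) ≤ ℓ(s(p^e − 1) + 1) − 1 for every e ≥ 1, and hence the F-threshold c^J(a) = sup_{e≥1} ν_a^J(p^e)/p^e satisfies c^J(a) ≤ sℓ; in particular c^J(a) is a finite real number. -/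
open Ideal

universe u

theorem flat_one_mem_map_colon {R S : Type u} [CommRing R] [CommRing S] (f : R →+* S)
    (hf : f.Flat) {I : Ideal R} {x : R} (h : f x ∈ I.map f) :
    (1 : S) ∈ (I.colon (Ideal.span {x})).map f := by
  classical
  letI : Algebra R S := f.toAlgebra
  haveI : Module.Flat R S := hf
  have hsmul : ∀ (r : R) (s : S), r • s = f r * s := fun r s => by
    rw [Algebra.smul_def, RingHom.algebraMap_toAlgebra]
  have h' : f x ∈ Submodule.span S (f '' (I : Set R)) := h
  obtain ⟨n, c, gg, hcg⟩ := Submodule.mem_span_set'.1 h'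
  choose k hkI hkf using fun i => (gg i).2
  -- the relation ∑ F i • X i = 0 over R in the R-module S
  set F : ULift.{u} (Fin (n + 1)) → R := fun i => Fin.cases x k i.down with hF
  set X : ULift.{u} (Fin (n + 1)) → S := fun i => Fin.cases 1 (fun j => -(c j)) i.down with hX
  have hrel : ∑ i, F i • X i = 0 := by
    have hconv := Fintype.sum_equiv (Equiv.ulift (α := Fin (n + 1))).symm
      (fun i : Fin (n + 1) => F ⟨i⟩ • X ⟨i⟩) (fun i => F i • X i) (fun _ => rfl)
    rw [← hconv]
    simp only [hF, hX]
    rw [Fin.sum_univ_succ]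
    simp only [Fin.cases_zero, Fin.cases_succ]
    have : ∀ i : Fin n, k i • (-(c i)) = -(c i • (gg i : S)) := by
      intro i
      rw [hsmul, hkf, smul_eq_mul, mul_comm]
      ring
    rw [Finset.sum_congr rfl fun i _ => this i, Finset.sum_neg_distrib, hcg, hsmul, mul_one]
    ring
  obtain ⟨κ, A, y, hA1, hA2⟩ :=
    Module.Flat.isTrivialRelation_of_sum_smul_eq_zero (M := S) (f := F) (x := X) (by exact hrel)
  have h1 : (1 : S) = ∑ j, A ⟨0⟩ j • y j := by
    have := hA1 ⟨0⟩
    simpa [hX] using this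
  have hcol : ∀ j, A ⟨0⟩ j ∈ I.colon (Ideal.span {x}) := by
    intro j
    rw [Ideal.mem_colon_span_singleton]
    have h2 := hA2 j
    have hconv := Fintype.sum_equiv (Equiv.ulift (α := Fin (n + 1))).symm
      (fun i : Fin (n + 1) => F ⟨i⟩ * A ⟨i⟩ j) (fun i => F i * A i j) (fun _ => rfl)
    rw [← hconv] at h2
    simp only [hF] at h2
    rw [Fin.sum_univ_succ] at h2
    simp only [Fin.cases_zero, Fin.cases_succ] at h2
    have hx' : A ⟨0⟩ j * x = -∑ i : Fin n, k i * A ⟨i.succ⟩ j := by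
      linear_combination h2
    rw [hx']
    exact Submodule.neg_mem _ (Ideal.sum_mem _ fun i _ =>
      Ideal.mul_mem_right _ _ (hkI i))
  rw [h1]
  refine Ideal.sum_mem _ fun j _ => ?_
  rw [hsmul]
  exact Ideal.mul_mem_right _ _ (Ideal.mem_map_of_mem f (hcol j))

theorem mem_bracketPow_of_mem {R : Type*} [CommRing R] {J : Ideal R} {y : R} (hy : y ∈ J)
    (q : ℕ) : y ^ q ∈ bracketPow J q :=
  Ideal.subset_span ⟨y, hy, rfl⟩

theorem bracketPow_mul_le {R : Type*} [CommRing R] (J : Ideal R) (m n : ℕ) :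
    bracketPow J (m * n) ≤ bracketPow (bracketPow J m) n := by
  rw [bracketPow, Ideal.span_le]
  rintro _ ⟨y, hy, rfl⟩
  show y ^ (m * n) ∈ (bracketPow (bracketPow J m) n : Set R)
  rw [pow_mul]
  exact SetLike.mem_coe.2 (mem_bracketPow_of_mem (mem_bracketPow_of_mem hy m) n)

theorem bracketPow_eq_map_s12 {R : Type*} [CommRing R] (p : ℕ) [Fact p.Prime] [CharP R p]
    (K : Ideal R) : bracketPow K p = K.map (frobenius R p) := by
  have h : ⇑(frobenius R p) = fun x : R => x ^ p := funext fun x => frobenius_def p x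
  rw [bracketPow, Ideal.map, h]

theorem frob_pow_mem {R : Type u} [CommRing R] (p : ℕ) [Fact p.Prime] [CharP R p]
    (hflat : (frobenius R p).Flat) {K : Ideal R} {x : R} (hx : x ^ p ∈ bracketPow K p) :
    x ∈ K := by
  have h1 : frobenius R p x ∈ K.map (frobenius R p) := by
    rw [← bracketPow_eq_map_s12, frobenius_def]; exact hx
  have h2 := flat_one_mem_map_colon _ hflat h1
  rw [← bracketPow_eq_map_s12] at h2
  have h3 : bracketPow (K.colon (Ideal.span {x})) p ≤ K.colon (Ideal.span {x}) := by
    rw [bracketPow, Ideal.span_le]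
    rintro _ ⟨y, hy, rfl⟩
    show y ^ p ∈ (K.colon (Ideal.span {x}) : Set R)
    exact SetLike.mem_coe.2
      (Ideal.pow_mem_of_mem _ (SetLike.mem_coe.1 hy) p (Fact.out (p := p.Prime)).pos)
  have h4 := Ideal.mem_colon_span_singleton.1 (h3 h2)
  simpa using h4

theorem prod_pow_mem_pow_sum {R : Type*} [CommRing R] {I : Ideal R} {s : ℕ} {g : Fin s → R}
    (hg : ∀ j, g j ∈ I) (b : Fin s → ℕ) (t : Finset (Fin s)) :
    (∏ j ∈ t, g j ^ b j) ∈ I ^ (∑ j ∈ t, b j) := by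
  classical
  induction t using Finset.induction_on with
  | empty => simp
  | insert _ _ hnot ih =>
    rw [Finset.prod_insert hnot, Finset.sum_insert hnot, pow_add]
    exact Ideal.mul_mem_mul (Ideal.pow_mem_pow (hg _) _) ih

theorem pow_le_bracketPow {R : Type*} [CommRing R] {s ℓ q : ℕ} (hq : 2 ≤ q) (hℓ : 1 ≤ ℓ)
    {g : Fin s → R} {J : Ideal R} (hJ : Ideal.span (Set.range g) ^ ℓ ≤ J) :
    Ideal.span (Set.range g) ^ (ℓ * (s * (q - 1) + 1)) ≤ bracketPow J q := by
  classical
  set n := ℓ * (s * (q - 1) + 1) with hn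
  have hn1 : 0 < n := Nat.mul_pos hℓ (Nat.succ_pos _)
  rw [Ideal.span, Submodule.span_pow, ← Ideal.span, Ideal.span_le]
  intro x hxmem
  obtain ⟨f, hf⟩ := Set.mem_pow.1 hxmem
  choose k hk using fun i => (f i).2
  have hx : x = ∏ i : Fin n, g (k i) := by
    rw [← hf, List.prod_ofFn]
    exact Finset.prod_congr rfl fun i _ => (hk i).symm
  have hs1 : 0 < s := lt_of_le_of_lt (Nat.zero_le _) (k ⟨0, hn1⟩).isLt
  set c : Fin s → ℕ := fun j => (Finset.univ.filter fun i => k i = j).card with hc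
  have hprod : ∏ i : Fin n, g (k i) = ∏ j : Fin s, g j ^ c j := by
    rw [← Finset.prod_fiberwise_of_maps_to (fun i _ => Finset.mem_univ (k i)) (fun i => g (k i))]
    refine Finset.prod_congr rfl fun j _ => ?_
    rw [Finset.prod_congr rfl (fun i hi => by rw [(Finset.mem_filter.1 hi).2]),
      Finset.prod_const, hc]
  have hsum : ∑ j, c j = n := by
    rw [hc, ← Finset.card_eq_sum_card_fiberwise (fun i (_ : i ∈ Finset.univ) => Finset.mem_univ (k i))]
    simp
  have hB : ℓ ≤ ∑ j, c j / q := by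
    by_contra hcon
    push_neg at hcon
    have hD : ∑ j, c j % q ≤ s * (q - 1) := by
      calc ∑ j, c j % q ≤ ∑ _j : Fin s, (q - 1) :=
            Finset.sum_le_sum fun j _ => Nat.le_sub_one_of_lt (Nat.mod_lt _ (by omega))
        _ = s * (q - 1) := by simp [Finset.sum_const, Finset.card_univ, Nat.smul_one_eq_cast]
    have hsplit : n = q * (∑ j, c j / q) + ∑ j, c j % q := by
      rw [← hsum, Finset.mul_sum, ← Finset.sum_add_distrib]
      exact Finset.sum_congr rfl fun j _ => (Nat.div_add_mod (c j) q).symm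
    obtain ⟨q1, rfl⟩ : ∃ q1, q = q1 + 2 := ⟨q - 2, by omega⟩
    obtain ⟨l1, rfl⟩ : ∃ l1, ℓ = l1 + 1 := ⟨ℓ - 1, by omega⟩
    set B := ∑ j, c j / (q1 + 2)
    set D := ∑ j, c j % (q1 + 2)
    have hq1 : q1 + 2 - 1 = q1 + 1 := by omega
    rw [hq1] at hD
    rw [hn, hq1] at hsplit
    have hBl : B ≤ l1 := by omega
    have e1 : l1 * (q1 + 1) ≤ l1 * (s * (q1 + 1)) :=
      Nat.mul_le_mul_left _ (Nat.le_mul_of_pos_left _ hs1)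
    nlinarith [hsplit, hD, hBl, e1, hs1]
  have hgmem : ∀ j, g j ∈ Ideal.span (Set.range g) :=
    fun j => Ideal.subset_span ⟨j, rfl⟩
  have hy : (∏ j, g j ^ (c j / q)) ∈ J :=
    hJ (Ideal.pow_le_pow_right hB (prod_pow_mem_pow_sum hgmem _ _))
  have hfact : ∏ j, g j ^ c j = (∏ j, g j ^ (c j / q)) ^ q * ∏ j, g j ^ (c j % q) := by
    rw [← Finset.prod_pow, ← Finset.prod_mul_distrib]
    refine Finset.prod_congr rfl fun j _ => ?_
    rw [← pow_mul, ← pow_add, mul_comm (c j / q) q, Nat.div_add_mod]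
  show x ∈ (bracketPow J q : Set R)
  rw [hx, hprod, hfact]
  exact SetLike.mem_coe.2 (Ideal.mul_mem_right _ _ (mem_bracketPow_of_mem hy q))


/-- aux -/
theorem nuF_eq {R : Type*} [CommRing R] (a J : Ideal R) (q : ℕ) :
    nuF a J q = sSup {r : ℕ | ¬ a ^ r ≤ bracketPow J q} := rfl

/-- basic properties of `ν_a^J(p^e)` and finiteness of the
F-threshold `c^J(a)`. -/
theorem stmt12_nu_and_threshold
    {R : Type*} [CommRing R] [IsNoetherianRing R] (p : ℕ) [Fact p.Prime] [CharP R p]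
    (hfin : (frobenius R p).Finite) (hflat : (frobenius R p).Flat)
    (a J : Ideal R) (hrad : a ≤ J.radical) :
    (∀ e : ℕ, 1 ≤ e → ∀ r : ℕ, ¬ a ^ r ≤ bracketPow J (p ^ e) →
        ¬ a ^ (p * r) ≤ bracketPow J (p ^ (e + 1))) ∧
    (∀ e : ℕ, 1 ≤ e →
      (nuF a J (p ^ e) : ℝ) / (p : ℝ) ^ e ≤
        (nuF a J (p ^ (e + 1)) : ℝ) / (p : ℝ) ^ (e + 1)) ∧
    (∀ (s ℓ : ℕ) (g : Fin s → R), a = Ideal.span (Set.range g) → 1 ≤ ℓ → a ^ ℓ ≤ J →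
      (∀ e : ℕ, 1 ≤ e → nuF a J (p ^ e) ≤ ℓ * (s * (p ^ e - 1) + 1) - 1) ∧
      FThreshold p a J ≤ (s : ℝ) * (ℓ : ℝ)) := by
  have hp2 : 2 ≤ p := (Fact.out (p := p.Prime)).two_le
  have hq2 : ∀ e : ℕ, 1 ≤ e → 2 ≤ p ^ e := fun e he =>
    le_trans hp2 (Nat.le_self_pow (by omega) p)
  have key1 : ∀ e r : ℕ, ¬ a ^ r ≤ bracketPow J (p ^ e) →
      ¬ a ^ (p * r) ≤ bracketPow J (p ^ (e + 1)) := by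
    intro e r h hcon
    apply h
    intro x hx
    have hxp : x ^ p ∈ a ^ (p * r) := by
      rw [mul_comm, pow_mul]
      exact Ideal.pow_mem_pow hx p
    have h2 : x ^ p ∈ bracketPow (bracketPow J (p ^ e)) p := by
      apply bracketPow_mul_le J (p ^ e) p
      rw [← pow_succ]
      exact hcon hxp
    exact frob_pow_mem p hflat h2
  obtain ⟨s₀, g₀, hg₀'⟩ :=
    Submodule.fg_iff_exists_fin_generating_family.1 (IsNoetherian.noetherian a)
  have hg₀ : Ideal.span (Set.range g₀) = a := hg₀'
  obtain ⟨m, hm⟩ := Ideal.exists_pow_le_of_le_radical_of_fg hrad (IsNoetherian.noetherian a)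
  have hm1 : a ^ (m + 1) ≤ J := le_trans (Ideal.pow_le_pow_right (Nat.le_succ m)) hm
  have hbound : ∀ e : ℕ, 1 ≤ e → ∀ r : ℕ, (m + 1) * (s₀ * (p ^ e - 1) + 1) ≤ r →
      a ^ r ≤ bracketPow J (p ^ e) := by
    intro e he r hr
    refine le_trans (Ideal.pow_le_pow_right hr) ?_
    rw [← hg₀]
    exact pow_le_bracketPow (hq2 e he) (Nat.le_add_left 1 m) (by rw [hg₀]; exact hm1)
  have hbdd : ∀ e : ℕ, 1 ≤ e → BddAbove {r : ℕ | ¬ a ^ r ≤ bracketPow J (p ^ e)} := by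
    intro e he
    refine ⟨(m + 1) * (s₀ * (p ^ e - 1) + 1), fun r hr => ?_⟩
    by_contra hlt
    push_neg at hlt
    exact hr (hbound e he r hlt.le)
  refine ⟨fun e _ => key1 e, ?_, ?_⟩
  · -- part 2: monotonicity
    intro e he
    by_cases hS : {r : ℕ | ¬ a ^ r ≤ bracketPow J (p ^ e)}.Nonempty
    · have hmem := Nat.sSup_mem hS (hbdd e he)
      have h2 : p * nuF a J (p ^ e) ∈ {r : ℕ | ¬ a ^ r ≤ bracketPow J (p ^ (e + 1))} :=
        key1 e _ hmem
      have h3 : p * nuF a J (p ^ e) ≤ nuF a J (p ^ (e + 1)) := by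
        rw [nuF_eq a J (p ^ (e + 1))]
        exact le_csSup (hbdd (e + 1) (by omega)) h2
      rw [div_le_div_iff₀ (by positivity) (by positivity)]
      have h4 : ((p : ℝ) * (nuF a J (p ^ e) : ℝ)) ≤ (nuF a J (p ^ (e + 1)) : ℝ) := by
        exact_mod_cast h3
      calc (nuF a J (p ^ e) : ℝ) * (p : ℝ) ^ (e + 1)
          = ((p : ℝ) * (nuF a J (p ^ e) : ℝ)) * (p : ℝ) ^ e := by ring
        _ ≤ (nuF a J (p ^ (e + 1)) : ℝ) * (p : ℝ) ^ e :=
            mul_le_mul_of_nonneg_right h4 (by positivity)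
    · have h0 : nuF a J (p ^ e) = 0 := by
        rw [nuF_eq, Set.not_nonempty_iff_eq_empty.1 hS]
        simpa using csSup_empty
      rw [h0]
      simp only [Nat.cast_zero, zero_div]
      positivity
  · -- part 3
    intro s ℓ g hga hl hpow
    have hb1 : ∀ e : ℕ, 1 ≤ e → nuF a J (p ^ e) ≤ ℓ * (s * (p ^ e - 1) + 1) - 1 := by
      intro e he
      rw [nuF_eq]
      apply csSup_le'
      intro r hr
      have hlt : r < ℓ * (s * (p ^ e - 1) + 1) := by
        by_contra hge
        push_neg at hge
        refine hr (le_trans (Ideal.pow_le_pow_right hge) ?_)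
        rw [hga]
        exact pow_le_bracketPow (hq2 e he) hl (by rw [← hga]; exact hpow)
      have hpos : 1 ≤ ℓ * (s * (p ^ e - 1) + 1) := Nat.mul_pos hl (Nat.succ_pos _)
      omega
    refine ⟨hb1, ?_⟩
    apply ciSup_le
    intro e
    have he1 : 1 ≤ e + 1 := by omega
    have hcase : nuF a J (p ^ (e + 1)) ≤ s * ℓ * p ^ (e + 1) := by
      rcases Nat.eq_zero_or_pos s with hs0 | hs1
      · subst hs0
        have ha : a = ⊥ := by
          rw [hga, Set.range_eq_empty g, Ideal.span_empty]
        have h0 : nuF a J (p ^ (e + 1)) = 0 := by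
          apply Nat.le_zero.1
          rw [nuF_eq]
          apply csSup_le'
          intro r hr
          rcases Nat.eq_zero_or_pos r with rfl | hrpos
          · exact le_refl 0
          · exfalso
            apply hr
            have hbot : a ^ r = ⊥ := by
              rw [ha, ← Ideal.zero_eq_bot, zero_pow (by omega : r ≠ 0)]
            rw [hbot]
            exact bot_le
        rw [h0]
        exact Nat.zero_le _
      · have h1 := hb1 (e + 1) he1
        have h2 : ℓ * (s * (p ^ (e + 1) - 1) + 1) ≤ s * ℓ * p ^ (e + 1) := by
          obtain ⟨q1, hq1⟩ : ∃ q1, p ^ (e + 1) = q1 + 1 :=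
            ⟨p ^ (e + 1) - 1, by have := hq2 (e + 1) he1; omega⟩
          rw [hq1]
          simp only [Nat.add_sub_cancel]
          nlinarith [hs1, hl]
        omega
    rw [div_le_iff₀ (by positivity)]
    calc (nuF a J (p ^ (e + 1)) : ℝ) ≤ ((s * ℓ * p ^ (e + 1) : ℕ) : ℝ) := by exact_mod_cast hcase
      _ = (s : ℝ) * (ℓ : ℝ) * (p : ℝ) ^ (e + 1) := by push_cast; ring
end
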